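/- arXiv:2304.04490 — 5 statements merged into one kernel-verified Lean document; each statement's English description precedes it below -/
import Mathlib

section
/- Let (R, m) be a commutative Noetherian local ring and let I be a proper ideal of R containing a non zero-divisor on R. Then I can be generated by elements each of which is a non zero-divisor on R. -/
universe u
open TensorProduct

variable (R : Type u) [CommRing R]

/-- Projective dimension at most `n`. -/
def pdLE (R : Type u) [CommRing R] :
    ℕ → ∀ (M : Type u) [AddCommGroup M] [Module R M], Prop
  | 0, M, _, _ => Module.Projective R M
  | n+1, M, _, _ => Module.Projective R M ∨
      ∃ (F : Type u) (_ : AddCommGroup F) (_ : Module R F) (f : F →ₗ[R] M),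
        Module.Projective R F ∧ Function.Surjective f ∧
          pdLE R n (LinearMap.ker f)

/-- Injective dimension at most `n`. -/
def idLE (R : Type u) [CommRing R] :
    ℕ → ∀ (M : Type u) [AddCommGroup M] [Module R M], Prop
  | 0, M, _, _ => Module.Injective R M
  | n+1, M, _, _ => Module.Injective R M ∨
      ∃ (I : Type u) (_ : AddCommGroup I) (_ : Module R I) (f : M →ₗ[R] I),
        Module.Injective R I ∧ Function.Injective f ∧
          idLE R n (I ⧸ LinearMap.range f)

/-- `Tor_i^R(M,N)` vanishes. -/
abbrev TorVanish (i : ℕ) (M N : Type u) [AddCommGroup M] [Module R M]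
    [AddCommGroup N] [Module R N] : Prop :=
  Subsingleton (((CategoryTheory.Tor (ModuleCat.{u} R) i).obj
      (ModuleCat.of R M)).obj (ModuleCat.of R N))

/-- `Ext^i_R(M,N)` vanishes. -/
abbrev ExtVanish (i : ℕ) (M N : Type u) [AddCommGroup M] [Module R M]
    [AddCommGroup N] [Module R N] : Prop :=
  Subsingleton (((Ext R (ModuleCat.{u} R) i).obj
      (Opposite.op (ModuleCat.of R M))).obj (ModuleCat.of R N))

/-- depth of the module `M` (w.r.t. ideal `J`) is at least `n`. -/
def depthGE (J : Ideal R) (n : ℕ) (M : Type u) [AddCommGroup M] [Module R M] : Prop :=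
  ∃ rs : List R, rs.length = n ∧ (∀ x ∈ rs, x ∈ J) ∧ RingTheory.Sequence.IsRegular M rs

/-- maximal Cohen-Macaulay module over a local ring -/
def IsMaximalCM [IsLocalRing R] (M : Type u) [AddCommGroup M] [Module R M] : Prop :=
  ∃ rs : List R, (∀ x ∈ rs, x ∈ IsLocalRing.maximalIdeal R) ∧
    RingTheory.Sequence.IsRegular M rs ∧ (rs.length : WithBot (WithTop ℕ)) = ringKrullDim R

def IsCMLocalRing [IsLocalRing R] : Prop := IsMaximalCM R R

/-- regular local ring: maximal ideal generated by a regular sequence -/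
def IsRegularLocalRing' [IsLocalRing R] : Prop :=
  ∃ rs : List R, RingTheory.Sequence.IsRegular R rs ∧
    Ideal.span {x | x ∈ rs} = IsLocalRing.maximalIdeal R

/-- canonical module of a Cohen-Macaulay local ring -/
def IsCanonicalModule [IsLocalRing R] (ω : Type u) [AddCommGroup ω] [Module R ω] : Prop :=
  Module.Finite R ω ∧ IsMaximalCM R ω ∧ (∃ n, idLE R n ω) ∧
    Function.Bijective (algebraMap R (Module.End R ω))

/-- A proper ideal of a Noetherian local ring containing a non zero-divisor
can be generated by non zero-divisors. -/
theorem stmt_1 (R : Type u) [CommRing R] [IsNoetherianRing R] [IsLocalRing R]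
    (I : Ideal R) (hI : I ≠ ⊤) (h : ∃ x ∈ I, IsSMulRegular R x) :
    ∃ S : Set R, (∀ x ∈ S, IsSMulRegular R x) ∧ Ideal.span S = I := by
  classical
  obtain ⟨x, hxI, hx⟩ := h
  obtain ⟨s₀, hs₀, hs₀'⟩ := Submodule.isLasker R R ⊥
  obtain ⟨s, hss, hsinf, hmin⟩ : ∃ t : Finset (Ideal R), t ⊆ s₀ ∧ t.inf id = ⊥ ∧
      ∀ ⦃J⦄, J ∈ t → ¬ (t.erase J).inf id ≤ J := Ideal.decomposition_erase_inf hs₀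
  have hsprim : ∀ J ∈ s, J.IsPrimary := fun J hJ => hs₀' (hss hJ)
  -- elements avoiding all radicals are regular
  have hreg : ∀ a : R, (∀ J ∈ s, a ∉ J.radical) → IsSMulRegular R a := by
    intro a ha
    intro b c hbc
    simp only [smul_eq_mul] at hbc
    by_contra hne
    have hb : a * (b - c) = 0 := by ring_nf; rw [mul_comm] at hbc ⊢; rw [hbc]; ring
    have hbc0 : b - c ≠ 0 := sub_ne_zero.mpr hne
    have : b - c ∉ (⊥ : Ideal R) := by simpa using hbc0
    rw [← hsinf] at this
    have : ∃ J ∈ s, b - c ∉ J := by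
      by_contra hc
      push_neg at hc
      exact this (by rw [Submodule.mem_finsetInf]; exact fun i hi => hc i hi)
    obtain ⟨J, hJ, hbJ⟩ := this
    have hprim := (Ideal.isPrimary_iff.mp (hsprim J hJ)).2 (x := b - c) (y := a)
      (by rw [mul_comm]; rw [hb]; exact J.zero_mem)
    exact ha J hJ (hprim.resolve_left hbJ)
  -- the regular x avoids all radicals
  have hxrad : ∀ J ∈ s, x ∉ J.radical := by
    intro J hJ hxJ
    obtain ⟨n, hxn⟩ := hxJ
    have := hmin hJ
    have hex : ∃ b ∈ (s.erase J).inf id, b ∉ J := by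
      by_contra hc
      push_neg at hc
      exact this fun b hb => hc b hb
    obtain ⟨b, hb, hbJ⟩ := hex
    have hmem : x ^ n * b ∈ s.inf id := by
      rw [Submodule.mem_finsetInf]
      intro K hK
      by_cases hKJ : K = J
      · subst hKJ; exact K.mul_mem_right b hxn
      · have : K ∈ s.erase J := Finset.mem_erase.mpr ⟨hKJ, hK⟩
        have hbK : b ∈ K := (Submodule.mem_finsetInf.mp hb) K this
        exact K.mul_mem_left _ hbK
    rw [hsinf, Ideal.mem_bot] at hmem
    have : b = 0 := by
      have hpow := hx.pow n
      have : x ^ n • b = x ^ n • (0 : R) := by simpa [smul_eq_mul] using hmem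
      exact hpow this
    exact hbJ (this ▸ J.zero_mem)
  have hIm : I ≤ IsLocalRing.maximalIdeal R := IsLocalRing.le_maximalIdeal hI
  -- key: for a ∈ I there is n > 0 with a + x^n regular
  have key : ∀ a ∈ I, ∃ n : ℕ, 0 < n ∧ IsSMulRegular R (a + x ^ n) := by
    intro a _
    by_contra hc
    push_neg at hc
    have hc' : ∀ n : ℕ, 0 < n → ∃ J ∈ s, a + x ^ n ∈ J.radical := by
      intro n hn
      by_contra hc2
      push_neg at hc2
      exact hc n hn (hreg _ hc2)
    have f : ∀ j : Fin (s.card + 1), ∃ J : {J // J ∈ s}, a + x ^ (j.1 + 1) ∈ J.1.radical := by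
      intro j
      obtain ⟨J, hJ, hJ'⟩ := hc' (j.1 + 1) (Nat.succ_pos _)
      exact ⟨⟨J, hJ⟩, hJ'⟩
    choose g hg using f
    have hcard : Fintype.card {J // J ∈ s} < Fintype.card (Fin (s.card + 1)) := by
      simp [Fintype.card_coe]
    obtain ⟨j, k, hjk, hgjk⟩ := Fintype.exists_ne_map_eq_of_card_lt g hcard
    have contra : ∀ j k : Fin (s.card + 1), (j : ℕ) < (k : ℕ) → g j = g k → False := by
      intro j k hlt hgjk
      have h1 := hg j
      have h2 : a + x ^ (k.1 + 1) ∈ (g j).1.radical := by rw [hgjk]; exact hg k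
      have hP : ((g j).1.radical).IsPrime := Ideal.isPrime_radical (hsprim _ (g j).2)
      have hsub : x ^ (j.1 + 1) - x ^ (k.1 + 1) ∈ (g j).1.radical := by
        have := Submodule.sub_mem _ h1 h2
        simpa using this
      have hfac : x ^ (j.1 + 1) * (1 - x ^ (k.1 - j.1)) ∈ (g j).1.radical := by
        rw [show k.1 + 1 = (j.1 + 1) + (k.1 - j.1) by omega, pow_add] at hsub
        convert hsub using 1; ring
      rcases hP.mem_or_mem hfac with hmem | hmem
      · exact hxrad _ (g j).2 (hP.mem_of_pow_mem _ hmem)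
      · have hunit : IsUnit (1 - x ^ (k.1 - j.1)) := by
          apply IsLocalRing.isUnit_one_sub_self_of_mem_nonunits
          exact Ideal.pow_mem_of_mem _ (hIm hxI) _ (by omega)
        exact hP.ne_top (Ideal.eq_top_of_isUnit_mem _ hmem hunit)
    rcases lt_or_gt_of_ne (fun hh : (j : ℕ) = (k : ℕ) => hjk (Fin.ext hh)) with hlt | hlt
    · exact contra j k hlt hgjk
    · exact contra k j hlt hgjk.symm
  refine ⟨{y | y ∈ I ∧ IsSMulRegular R y}, fun y hy => hy.2, le_antisymm ?_ ?_⟩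
  · rw [Ideal.span_le]; exact fun y hy => hy.1
  · intro a ha
    obtain ⟨n, hn, hreg'⟩ := key a ha
    have hxn : x ^ n ∈ I := I.pow_mem_of_mem hxI n hn
    have h1 : (a + x ^ n) ∈ Ideal.span {y | y ∈ I ∧ IsSMulRegular R y} :=
      Ideal.subset_span ⟨I.add_mem ha hxn, hreg'⟩
    have h2 : x ^ n ∈ Ideal.span {y | y ∈ I ∧ IsSMulRegular R y} :=
      Ideal.subset_span ⟨hxn, hx.pow n⟩
    have := Submodule.sub_mem _ h1 h2
    simpa using this
end

section
/- Let (R, m, k) be a commutative Noetherian local ring of positive depth. Then there exist elements x_1, ..., x_n in m, each a non zero-divisor on R, such that the residue field k is isomorphic to the tensor product (R/x_1R) ⊗_R ⋯ ⊗_R (R/x_nR). -/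
universe u
open TensorProduct

variable (R : Type u) [CommRing R]

section Aux
variable {R : Type u} [CommRing R]

/-- Coset avoidance: if `x` is a regular element of the maximal ideal of a Noetherian
local ring, then for every `y` some `y + x^(k+1)` is regular. -/
lemma exists_regular_add [IsNoetherianRing R] [IsLocalRing R]
    {x : R} (hx : IsSMulRegular R x) (hxm : x ∈ IsLocalRing.maximalIdeal R) (y : R) :
    ∃ a ∈ Ideal.span {x}, IsSMulRegular R (y + a) := by
  classical
  obtain ⟨(t : Finset (Ideal R)), ht_inf, ht_primary, -, ht_irr⟩ := Ideal.IsLasker.minimal (Ideal.isLasker R R) ⊥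
  -- every zero divisor lies in the radical of some component
  have claim1 : ∀ r : R, ¬ IsSMulRegular R r → ∃ J ∈ t, r ∈ J.radical := by
    intro r hr
    have hex : ∃ z : R, z ≠ 0 ∧ r * z = 0 := by
      by_contra h
      push_neg at h
      apply hr
      intro a b hab
      have h0 : r * (a - b) = 0 := by
        have h1 : r * a = r * b := by simpa [smul_eq_mul] using hab
        rw [mul_sub, h1, sub_self]
      by_cases hab' : a - b = 0
      · exact sub_eq_zero.mp hab'
      · exact absurd h0 (h _ hab')
    obtain ⟨z, hz, hrz⟩ := hex
    have hznot : ∃ J ∈ t, z ∉ J := by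
      by_contra h
      push_neg at h
      have : z ∈ t.inf id := by
        rw [Submodule.mem_finsetInf]
        intro i hi; exact h i hi
      rw [ht_inf] at this
      exact hz this
    obtain ⟨J, hJ, hzJ⟩ := hznot
    refine ⟨J, hJ, ?_⟩
    have hmem : z * r ∈ J := by rw [mul_comm, hrz]; exact J.zero_mem
    rcases (Ideal.isPrimary_iff.mp (ht_primary hJ)).2 hmem with h | h
    · exact absurd h hzJ
    · exact h
  -- x is not in any radical
  have claim2 : ∀ J ∈ t, x ∉ J.radical := by
    intro J hJ hxr
    obtain ⟨m, hm⟩ := hxr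
    obtain ⟨z, hz1, hz2⟩ : ∃ z : R, z ∈ (t.erase J).inf id ∧ z ∉ J := by
      have := ht_irr hJ
      rw [SetLike.not_le_iff_exists] at this
      exact this
    have hz0 : z ≠ 0 := fun h => hz2 (h ▸ J.zero_mem)
    have hxz : x ^ m * z = 0 := by
      have : x ^ m * z ∈ t.inf id := by
        rw [Submodule.mem_finsetInf]
        intro i hi
        by_cases hiJ : i = J
        · subst hiJ; exact Ideal.mul_mem_right _ _ hm
        · have : z ∈ i := by
            have := Submodule.mem_finsetInf.mp hz1 i (Finset.mem_erase.mpr ⟨hiJ, hi⟩)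
            exact this
          exact Ideal.mul_mem_left _ _ this
      rw [ht_inf] at this
      exact this
    exact hz0 ((hx.pow m) (by simpa [smul_eq_mul] using hxz))
  -- each radical contains at most one y + x^(k+1)
  have key : ∀ J ∈ t, ∀ k l : ℕ, k < l → y + x ^ (k + 1) ∈ J.radical →
      y + x ^ (l + 1) ∈ J.radical → False := by
    intro J hJ k l hkl hk hl
    have hp : (J.radical).IsPrime := Ideal.isPrime_radical (ht_primary hJ)
    have hsub : x ^ (k + 1) * (1 - x ^ (l - k)) ∈ J.radical := by
      have hmem : (y + x ^ (k + 1)) - (y + x ^ (l + 1)) ∈ J.radical := sub_mem hk hl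
      have heq : (y + x ^ (k + 1)) - (y + x ^ (l + 1)) = x ^ (k + 1) * (1 - x ^ (l - k)) := by
        have hlk : k + 1 + (l - k) = l + 1 := by omega
        rw [mul_sub, mul_one, ← pow_add, hlk]
        ring
      rwa [heq] at hmem
    have hunit : IsUnit (1 - x ^ (l - k)) := by
      apply IsLocalRing.isUnit_one_sub_self_of_mem_nonunits
      have : x ^ (l - k) ∈ IsLocalRing.maximalIdeal R := by
        have hlk : l - k = (l - k - 1) + 1 := by omega
        rw [hlk, pow_succ]
        exact Ideal.mul_mem_left _ _ hxm
      exact this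
    have : x ^ (k + 1) ∈ J.radical := by
      rcases hp.mem_or_mem hsub with h | h
      · exact h
      · exact absurd (Ideal.eq_top_of_isUnit_mem _ h hunit) hp.ne_top
    exact claim2 J hJ (hp.mem_of_pow_mem _ this)
  have claim3 : ∀ J ∈ t, {k : ℕ | y + x ^ (k + 1) ∈ J.radical}.Subsingleton := by
    intro J hJ k hk l hl
    by_contra hne
    rcases Nat.lt_or_ge k l with h | h
    · exact key J hJ k l h hk hl
    · exact key J hJ l k (by omega) hl hk
  -- pigeonhole
  have hbad : (⋃ J ∈ t, {k : ℕ | y + x ^ (k + 1) ∈ J.radical}).Finite :=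
    Set.Finite.biUnion t.finite_toSet (fun J hJ => (claim3 J hJ).finite)
  obtain ⟨k, hk⟩ := hbad.exists_notMem
  refine ⟨x ^ (k + 1), Ideal.mem_span_singleton.mpr (dvd_pow_self x (Nat.succ_ne_zero k)), ?_⟩
  by_contra hreg
  obtain ⟨J, hJ, hmem⟩ := claim1 _ hreg
  exact hk (Set.mem_biUnion hJ hmem)

open PiTensorProduct in
/-- `R ⧸ span(range x)` is the tensor product of the `R ⧸ (x i)`. -/
noncomputable def piTensorQuotEquiv (n : ℕ) (x : Fin n → R) :
    (R ⧸ Ideal.span (Set.range x)) ≃ₗ[R] ⨂[R] i : Fin n, (R ⧸ Ideal.span {x i}) := by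
  set J := Ideal.span (Set.range x) with hJ
  set T : ⨂[R] i : Fin n, (R ⧸ Ideal.span {x i}) :=
    tprod R (fun i => Submodule.Quotient.mk 1) with hT
  have hxT : ∀ i : Fin n, x i • T = 0 := by
    intro i
    have h1 : (x i) • (Submodule.Quotient.mk 1 : R ⧸ Ideal.span {x i}) = 0 := by
      rw [← Submodule.Quotient.mk_smul, Submodule.Quotient.mk_eq_zero]
      simpa using Ideal.mem_span_singleton_self (x i)
    have h2 := MultilinearMap.map_update_smul (tprod R (s := fun i => R ⧸ Ideal.span {x i}))
      (fun _ => Submodule.Quotient.mk 1) i (x i) (Submodule.Quotient.mk 1)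
    rw [Function.update_eq_self] at h2
    rw [hT, ← h2, h1, MultilinearMap.map_update_zero]
  have hker : J ≤ LinearMap.ker (LinearMap.toSpanSingleton R _ T) := by
    intro r hr
    rw [LinearMap.mem_ker, LinearMap.toSpanSingleton_apply]
    obtain ⟨c, rfl⟩ := (Submodule.mem_span_range_iff_exists_fun R).mp hr
    rw [Finset.sum_smul]
    refine Finset.sum_eq_zero fun i _ => ?_
    rw [smul_eq_mul, mul_smul, hxT, smul_zero]
  have hle : ∀ i, Ideal.span {x i} ≤ Submodule.comap (LinearMap.id : R →ₗ[R] R) J := by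
    intro i
    rw [Submodule.comap_id]
    exact (Ideal.span_singleton_le_iff_mem _).mpr (Ideal.subset_span ⟨i, rfl⟩)
  let π : ∀ i, (R ⧸ Ideal.span {x i}) →ₗ[R] R ⧸ J := fun i =>
    Submodule.mapQ _ _ LinearMap.id (hle i)
  let ψ : (⨂[R] i : Fin n, R ⧸ Ideal.span {x i}) →ₗ[R] R ⧸ J :=
    PiTensorProduct.lift ((MultilinearMap.mkPiAlgebra R (Fin n) (R ⧸ J)).compLinearMap π)
  refine LinearEquiv.ofLinear (Submodule.liftQ J _ hker) ψ ?_ ?_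
  · apply PiTensorProduct.ext
    apply MultilinearMap.ext
    intro f
    choose r hr using fun i => Submodule.Quotient.mk_surjective (Ideal.span {x i}) (f i)
    have hf : f = fun i => Submodule.Quotient.mk (r i) := funext fun i => (hr i).symm
    subst hf
    simp only [LinearMap.compMultilinearMap_apply, LinearMap.comp_apply,
      LinearMap.id_apply]
    have hψ : ψ (tprod R fun i => Submodule.Quotient.mk (r i)) =
        Submodule.Quotient.mk (∏ i, r i) := by
      simp only [ψ, PiTensorProduct.lift.tprod, MultilinearMap.compLinearMap_apply,
        MultilinearMap.mkPiAlgebra_apply, π, Submodule.mapQ_apply, LinearMap.id_apply]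
      rw [show (Submodule.Quotient.mk (∏ i, r i) : R ⧸ J) = Ideal.Quotient.mk J (∏ i, r i) from rfl,
        map_prod]
      rfl
    rw [hψ, Submodule.liftQ_apply, LinearMap.toSpanSingleton_apply, hT,
      ← MultilinearMap.map_smul_univ]
    congr 1
    funext i
    rw [← Submodule.Quotient.mk_smul, smul_eq_mul, mul_one]
  · apply Submodule.linearMap_qext
    ext r
    simp only [LinearMap.comp_apply, Submodule.mkQ_apply, Submodule.liftQ_apply,
      LinearMap.toSpanSingleton_apply, LinearMap.id_comp, map_smul]
    have hpsiT : ψ T = 1 := by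
      rw [hT]
      simp only [ψ, PiTensorProduct.lift.tprod, MultilinearMap.compLinearMap_apply,
        MultilinearMap.mkPiAlgebra_apply]
      exact Finset.prod_eq_one fun i _ => rfl
    rw [hpsiT]
    rw [show (1 : R ⧸ J) = Submodule.Quotient.mk 1 from rfl, ← Submodule.Quotient.mk_smul,
      smul_eq_mul, mul_one]

end Aux

open scoped TensorProduct in
/-- Over a Noetherian local ring of positive depth, the residue field is a tensor
product of quotients by non zero-divisors. -/
theorem stmt_2 (R : Type u) [CommRing R] [IsNoetherianRing R] [IsLocalRing R]
    (hdepth : ∃ x ∈ IsLocalRing.maximalIdeal R, IsSMulRegular R x) :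
    ∃ (n : ℕ) (x : Fin n → R), 0 < n ∧
      (∀ i, x i ∈ IsLocalRing.maximalIdeal R ∧ IsSMulRegular R (x i)) ∧
      Nonempty ((R ⧸ IsLocalRing.maximalIdeal R) ≃ₗ[R]
        (⨂[R] i : Fin n, R ⧸ Ideal.span {x i})) := by
  obtain ⟨x, hxm, hx⟩ := hdepth
  have hfg : (IsLocalRing.maximalIdeal R).FG := IsNoetherian.noetherian _
  obtain ⟨r, y, hy⟩ := Submodule.fg_iff_exists_fin_generating_family.mp hfg
  choose a ha hreg using fun i : Fin r => exists_regular_add hx hxm (y i)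
  set z : Fin (r + 1) → R := Fin.cons x (fun i => y i + a i) with hz
  have hym : ∀ i, y i ∈ IsLocalRing.maximalIdeal R := fun i =>
    hy ▸ Submodule.subset_span ⟨i, rfl⟩
  have ham : ∀ i, a i ∈ IsLocalRing.maximalIdeal R := fun i =>
    (Ideal.span_singleton_le_iff_mem _).mpr hxm (ha i)
  have hzm : ∀ i, z i ∈ IsLocalRing.maximalIdeal R := by
    intro i
    refine Fin.cases ?_ ?_ i
    · simpa [hz] using hxm
    · intro j; simpa [hz] using add_mem (hym j) (ham j)
  have hzreg : ∀ i, IsSMulRegular R (z i) := by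
    intro i
    refine Fin.cases ?_ ?_ i
    · simpa [hz] using hx
    · intro j; simpa [hz] using hreg j
  have hspan : Ideal.span (Set.range z) = IsLocalRing.maximalIdeal R := by
    apply le_antisymm
    · rw [Ideal.span_le]
      rintro _ ⟨i, rfl⟩
      exact hzm i
    · rw [← hy, Submodule.span_le]
      rintro _ ⟨i, rfl⟩
      have h1 : y i + a i ∈ Ideal.span (Set.range z) :=
        Ideal.subset_span ⟨i.succ, by simp [hz]⟩
      have h2 : a i ∈ Ideal.span (Set.range z) := by
        have hxz : x ∈ Ideal.span (Set.range z) := Ideal.subset_span ⟨0, by simp [hz]⟩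
        exact (Ideal.span_singleton_le_iff_mem _).mpr hxz (ha i)
      simpa using sub_mem h1 h2
  refine ⟨r + 1, z, Nat.succ_pos r, fun i => ⟨hzm i, hzreg i⟩, ?_⟩
  exact ⟨(Submodule.quotEquivOfEq _ _ hspan.symm).trans (piTensorQuotEquiv (r + 1) z)⟩
end

section
/- Let (R, m) be a commutative Noetherian local ring and x ∈ m a nonzero element. Then pd_R(R/xR) < ∞ if and only if x is a non zero-divisor on R. -/
universe u
open TensorProduct

variable (R : Type u) [CommRing R]

namespace ABaux

open Module LinearMap Function

variable {R : Type u} [CommRing R]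

section helpers

variable {X Y Z : Type u} [AddCommGroup X] [Module R X] [AddCommGroup Y] [Module R Y]
  [AddCommGroup Z] [Module R Z]

/-- A split surjection decomposes the middle as product. -/
noncomputable def splitEquiv (π : X →ₗ[R] Y) (σ : Y →ₗ[R] X) (h : π ∘ₗ σ = LinearMap.id) :
    X ≃ₗ[R] Y × (ker π) :=
  LinearEquiv.ofLinear
    (LinearMap.prod π ((LinearMap.id - σ ∘ₗ π).codRestrict (ker π) (fun x => by
      have hx := LinearMap.congr_fun h (π x)
      simp only [LinearMap.comp_apply, LinearMap.id_apply] at hx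
      simp [LinearMap.mem_ker, map_sub, hx])))
    (σ ∘ₗ LinearMap.fst R Y (ker π) + (ker π).subtype ∘ₗ LinearMap.snd R Y (ker π))
    (by
      apply LinearMap.ext
      rintro ⟨y, z⟩
      have hx := LinearMap.congr_fun h y
      simp only [LinearMap.comp_apply, LinearMap.id_apply] at hx
      apply Prod.ext
      · simp [hx, z.2]
      · apply Subtype.ext
        simp [hx, z.2])
    (by
      apply LinearMap.ext
      intro x
      simp)

noncomputable def kerCompEquiv (f : X →ₗ[R] Y) (e : Z ≃ₗ[R] X) :
    (ker (f ∘ₗ (e : Z →ₗ[R] X))) ≃ₗ[R] ker f := by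
  have h : ker (f ∘ₗ (e : Z →ₗ[R] X)) = Submodule.map (e.symm : X →ₗ[R] Z) (ker f) := by
    ext z
    simp only [LinearMap.mem_ker, LinearMap.comp_apply, Submodule.mem_map]
    constructor
    · intro hz; exact ⟨e z, hz, by simp⟩
    · rintro ⟨x, hx, rfl⟩; simpa using hx
  exact (LinearEquiv.ofEq _ _ h).trans (e.symm.submoduleMap (ker f)).symm

noncomputable def kerEquivCompEquiv (e : Y ≃ₗ[R] Z) (f : X →ₗ[R] Y) :
    (ker ((e : Y →ₗ[R] Z) ∘ₗ f)) ≃ₗ[R] ker f :=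
  LinearEquiv.ofEq _ _ (by ext x; simp)

end helpers

end ABaux
namespace ABaux

open Module LinearMap Function

variable {R : Type u} [CommRing R]

section prodsub
variable {X Y : Type u} [AddCommGroup X] [Module R X] [AddCommGroup Y] [Module R Y]

def prodSubEquiv (p : Submodule R X) (q : Submodule R Y) : (p.prod q) ≃ₗ[R] p × q where
  toFun z := (⟨z.1.1, z.2.1⟩, ⟨z.1.2, z.2.2⟩)
  invFun z := ⟨(z.1.1, z.2.1), ⟨z.1.2, z.2.2⟩⟩
  map_add' := by intros; rfl
  map_smul' := by intros; rfl
  left_inv := fun _ => rfl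
  right_inv := fun _ => rfl

end prodsub

theorem pdLE_congr : ∀ (n : ℕ) {M N : Type u} [AddCommGroup M] [Module R M]
    [AddCommGroup N] [Module R N] (_ : M ≃ₗ[R] N), pdLE R n M → pdLE R n N
  | 0, M, N, _, _, _, _, e, h => by
      simp only [pdLE] at h ⊢
      haveI : Module.Projective R M := h
      exact Module.Projective.of_split e.symm.toLinearMap e.toLinearMap
        (by apply LinearMap.ext; intro x; simp)
  | n+1, M, N, _, _, _, _, e, h => by
      simp only [pdLE] at h ⊢
      rcases h with h | ⟨F, iF1, iF2, f, hF, hs, hk⟩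
      · left
        haveI : Module.Projective R M := h
        exact Module.Projective.of_split e.symm.toLinearMap e.toLinearMap
          (by apply LinearMap.ext; intro x; simp)
      · right
        exact ⟨F, iF1, iF2, e.toLinearMap ∘ₗ f, hF, e.surjective.comp hs,
          pdLE_congr n (kerEquivCompEquiv e f).symm hk⟩

theorem pdLE_of_projective : ∀ (n : ℕ) {M : Type u} [AddCommGroup M] [Module R M],
    Module.Projective R M → pdLE R n M
  | 0, M, _, _ => fun h => h
  | n+1, M, _, _ => fun h => Or.inl h

theorem pdLE_prod_proj : ∀ (n : ℕ) {M P : Type u} [AddCommGroup M] [Module R M]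
    [AddCommGroup P] [Module R P] (_ : Module.Projective R P), pdLE R n M → pdLE R n (M × P)
  | 0, M, P, _, _, _, _, hP => fun h => by
      simp only [pdLE] at h ⊢
      haveI : Module.Projective R M := h
      haveI : Module.Projective R P := hP
      infer_instance
  | n+1, M, P, _, _, _, _, hP => fun h => by
      simp only [pdLE] at h ⊢
      rcases h with h | ⟨F, iF1, iF2, f, hF, hs, hk⟩
      · left
        haveI : Module.Projective R M := h
        haveI : Module.Projective R P := hP
        infer_instance
      · right
        refine ⟨F × P, inferInstance, inferInstance, f.prodMap LinearMap.id,
          (by haveI := hF; haveI := hP; infer_instance), ?_, ?_⟩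
        · intro ⟨m, p⟩
          obtain ⟨a, ha⟩ := hs m
          exact ⟨(a, p), by simp [ha]⟩
        · haveI : Subsingleton (ker (LinearMap.id : P →ₗ[R] P)) := by
            constructor
            rintro ⟨a, ha⟩ ⟨b, hb⟩
            simp only [LinearMap.mem_ker, LinearMap.id_apply] at ha hb
            simp [Subtype.ext_iff, ha, hb]
          have h1 : pdLE R n ((ker f) × (ker (LinearMap.id : P →ₗ[R] P))) :=
            pdLE_prod_proj n
              (by haveI := Module.Free.of_subsingleton R
                    (↥(ker (LinearMap.id : P →ₗ[R] P)))
                  exact Module.Projective.of_free) hk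
          refine pdLE_congr n ?_ h1
          exact (prodSubEquiv (ker f) (ker (LinearMap.id : P →ₗ[R] P))).symm.trans
            (LinearEquiv.ofEq _ _ (LinearMap.ker_prodMap f (LinearMap.id : P →ₗ[R] P)).symm)

end ABaux

namespace ABaux

open Module LinearMap Function

variable {R : Type u} [CommRing R]

section schanuel

variable {F G M : Type u} [AddCommGroup F] [Module R F] [AddCommGroup G] [Module R G]
  [AddCommGroup M] [Module R M]

/-- Schanuel's lemma. -/
theorem schanuel (f : F →ₗ[R] M) (g : G →ₗ[R] M)
    (hFproj : Module.Projective R F) (hGproj : Module.Projective R G)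
    (hf : Surjective f) (hg : Surjective g) :
    Nonempty ((ker f × G) ≃ₗ[R] (ker g × F)) := by
  haveI := hFproj; haveI := hGproj
  set d : F × G →ₗ[R] M := f ∘ₗ (fst R F G) - g ∘ₗ (snd R F G) with hd
  set X : Submodule R (F × G) := ker d with hX
  have memX : ∀ v : F × G, v ∈ X ↔ f v.1 = g v.2 := by
    intro v
    rw [hX, LinearMap.mem_ker, hd]
    simp [sub_eq_zero]
  let π1 : X →ₗ[R] F := (fst R F G) ∘ₗ X.subtype
  let π2 : X →ₗ[R] G := (snd R F G) ∘ₗ X.subtype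
  have hπ1 : Surjective π1 := by
    intro a
    obtain ⟨b, hb⟩ := hg (f a)
    exact ⟨⟨(a, b), (memX (a, b)).2 hb.symm⟩, rfl⟩
  have hπ2 : Surjective π2 := by
    intro b
    obtain ⟨a, ha⟩ := hf (g b)
    exact ⟨⟨(a, b), (memX (a, b)).2 ha⟩, rfl⟩
  obtain ⟨σ1, hσ1⟩ := Module.projective_lifting_property π1 LinearMap.id hπ1
  obtain ⟨σ2, hσ2⟩ := Module.projective_lifting_property π2 LinearMap.id hπ2
  let e1 : X ≃ₗ[R] F × (ker π1) := splitEquiv π1 σ1 hσ1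
  let e2 : X ≃ₗ[R] G × (ker π2) := splitEquiv π2 σ2 hσ2
  let eg : (ker π1) ≃ₗ[R] ker g :=
    { toFun := fun z => ⟨(z.1 : F × G).2, by
        have h1 : f (z.1 : F × G).1 = g (z.1 : F × G).2 := (memX _).1 z.1.2
        have h2 : (z.1 : F × G).1 = 0 := z.2
        rw [LinearMap.mem_ker, ← h1, h2, map_zero]⟩
      invFun := fun w => ⟨⟨(0, (w : G)), (memX _).2 (by simp [w.2])⟩, by
        simp only [LinearMap.mem_ker]; rfl⟩
      map_add' := fun _ _ => rfl
      map_smul' := fun _ _ => rfl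
      left_inv := fun z => by
        apply Subtype.ext; apply Subtype.ext
        have h2 : (z.1 : F × G).1 = 0 := z.2
        exact Prod.ext h2.symm rfl
      right_inv := fun w => rfl }
  let ef : (ker π2) ≃ₗ[R] ker f :=
    { toFun := fun z => ⟨(z.1 : F × G).1, by
        have h1 : f (z.1 : F × G).1 = g (z.1 : F × G).2 := (memX _).1 z.1.2
        have h2 : (z.1 : F × G).2 = 0 := z.2
        rw [LinearMap.mem_ker, h1, h2, map_zero]⟩
      invFun := fun w => ⟨⟨((w : F), 0), (memX _).2 (by simp [w.2])⟩, by
        simp only [LinearMap.mem_ker]; rfl⟩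
      map_add' := fun _ _ => rfl
      map_smul' := fun _ _ => rfl
      left_inv := fun z => by
        apply Subtype.ext; apply Subtype.ext
        have h2 : (z.1 : F × G).2 = 0 := z.2
        exact Prod.ext rfl h2.symm
      right_inv := fun w => rfl }
  exact ⟨(((((LinearEquiv.prodComm R (ker f) G).trans
    (LinearEquiv.prodCongr (LinearEquiv.refl R G) ef.symm)).trans
    e2.symm).trans e1).trans
    (LinearEquiv.prodCongr (LinearEquiv.refl R F) eg)).trans
    (LinearEquiv.prodComm R F (ker g))⟩

end schanuel

theorem pdLE_prod_left : ∀ (n : ℕ) {Y Z : Type u} [AddCommGroup Y] [Module R Y]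
    [AddCommGroup Z] [Module R Z], pdLE R n (Y × Z) → pdLE R n Y
  | 0, Y, Z, _, _, _, _ => fun h => by
      simp only [pdLE] at h ⊢
      haveI : Module.Projective R (Y × Z) := h
      exact Module.Projective.of_split (LinearMap.inl R Y Z) (LinearMap.fst R Y Z)
        (by apply LinearMap.ext; intro x; simp)
  | n+1, Y, Z, _, _, _, _ => fun h => by
      simp only [pdLE] at h
      rcases h with h | ⟨F, iF1, iF2, f, hF, hs, hk⟩
      · left
        haveI : Module.Projective R (Y × Z) := h
        exact Module.Projective.of_split (LinearMap.inl R Y Z) (LinearMap.fst R Y Z)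
          (by apply LinearMap.ext; intro x; simp)
      · right
        haveI := hF
        let p : (Y →₀ R) →ₗ[R] Y := Finsupp.linearCombination R _root_.id
        let q : (Z →₀ R) →ₗ[R] Z := Finsupp.linearCombination R _root_.id
        have hp : Surjective p := Finsupp.linearCombination_id_surjective R Y
        have hq : Surjective q := Finsupp.linearCombination_id_surjective R Z
        have hpq : Surjective (p.prodMap q) := by
          intro ⟨y, z⟩
          obtain ⟨a, ha⟩ := hp y
          obtain ⟨b, hb⟩ := hq z
          exact ⟨(a, b), by simp [ha, hb]⟩
        obtain ⟨E⟩ := schanuel f (p.prodMap q) hF inferInstance hs hpq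
        have h1 : pdLE R n ((ker f) × ((Y →₀ R) × (Z →₀ R))) :=
          pdLE_prod_proj n inferInstance hk
        have h2 : pdLE R n ((ker (p.prodMap q)) × F) := pdLE_congr n E h1
        have h3 : pdLE R n (ker (p.prodMap q)) := pdLE_prod_left n h2
        have h4 : pdLE R n ((ker p) × (ker q)) :=
          pdLE_congr n ((LinearEquiv.ofEq _ _ (LinearMap.ker_prodMap p q)).trans
            (prodSubEquiv (ker p) (ker q))) h3
        have h5 : pdLE R n (ker p) := pdLE_prod_left n h4
        exact ⟨Y →₀ R, inferInstance, inferInstance, p, inferInstance, hp, h5⟩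

end ABaux

/-- finite free resolution with Euler characteristic bookkeeping -/
def FFRc (A : Type u) [CommRing A] : ℕ → ∀ (M : Type u) [AddCommGroup M] [Module A M], ℤ → Prop
  | 0, M, _, _, c => Module.Free A M ∧ Module.Finite A M ∧ c = (Module.finrank A M : ℤ)
  | n+1, M, _, _, c => ∃ (a : ℕ) (f : (Fin a → A) →ₗ[A] M),
      Function.Surjective f ∧ FFRc A n (LinearMap.ker f) ((a : ℤ) - c)

namespace ABaux

open Module LinearMap Function

variable {R : Type u} [CommRing R]

theorem ffrc_congr : ∀ (n : ℕ) {M N : Type u} [AddCommGroup M] [Module R M]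
    [AddCommGroup N] [Module R N] (_ : M ≃ₗ[R] N) {c : ℤ}, FFRc R n M c → FFRc R n N c
  | 0, M, N, _, _, _, _, e, c, h => by
      obtain ⟨h1, h2, h3⟩ := h
      exact ⟨h1.of_equiv e, h2.equiv e, by rw [← e.finrank_eq]; exact h3⟩
  | n+1, M, N, _, _, _, _, e, c, h => by
      obtain ⟨a, f, hs, hk⟩ := h
      exact ⟨a, e.toLinearMap ∘ₗ f, e.surjective.comp hs,
        ffrc_congr n (kerEquivCompEquiv e f).symm hk⟩

theorem ffrc_of_pdLE [IsNoetherianRing R] [IsLocalRing R] :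
    ∀ (n : ℕ) {M : Type u} [AddCommGroup M] [Module R M] (_ : Module.Finite R M),
    pdLE R n M → ∃ c, FFRc R n M c
  | 0, M, _, _, hfin, h => by
      haveI := hfin
      haveI : Module.Projective R M := h
      haveI := Module.finitePresentation_of_projective R M
      haveI : Module.Free R M := Module.free_of_flat_of_isLocalRing
      exact ⟨(Module.finrank R M : ℤ), ⟨inferInstance, inferInstance, rfl⟩⟩
  | n+1, M, _, _, hfin, h => by
      haveI := hfin
      obtain ⟨a, g, hg⟩ := Module.Finite.exists_fin' R M
      haveI : Module.Finite R (ker g) :=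
        Module.Finite.iff_fg.mpr (IsNoetherian.noetherian _)
      have hker : pdLE R n (ker g) := by
        simp only [pdLE] at h
        rcases h with h | ⟨F, iF1, iF2, f, hF, hs, hk⟩
        · haveI : Module.Projective R M := h
          obtain ⟨σ, hσ⟩ := Module.projective_lifting_property g LinearMap.id hg
          have h0 : pdLE R 0 (Fin a → R) := (inferInstance : Module.Projective R (Fin a → R))
          have h1 : pdLE R 0 (M × ker g) := pdLE_congr 0 (splitEquiv g σ hσ) h0
          have h2 : pdLE R 0 ((ker g) × M) :=
            pdLE_congr 0 (LinearEquiv.prodComm R M (ker g)) h1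
          exact pdLE_of_projective n (pdLE_prod_left 0 h2)
        · obtain ⟨E⟩ := schanuel f g hF inferInstance hs hg
          exact pdLE_prod_left n (pdLE_congr n E (pdLE_prod_proj n inferInstance hk))
      obtain ⟨c', hc'⟩ := ffrc_of_pdLE n inferInstance hker
      refine ⟨(a : ℤ) - c', a, g, hg, ?_⟩
      have : (a : ℤ) - ((a : ℤ) - c') = c' := by ring
      rw [this]
      exact hc'

theorem ffrc_baseChange (A : Type u) [CommRing A] [Algebra R A] [Nontrivial R] [Nontrivial A]
    [Module.Flat R A] :
    ∀ (n : ℕ) {M : Type u} [AddCommGroup M] [Module R M] {c : ℤ},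
    FFRc R n M c → FFRc A n (A ⊗[R] M) c
  | 0, M, _, _, c, h => by
      obtain ⟨h1, h2, h3⟩ := h
      haveI := h1; haveI := h2
      let b := Module.Free.chooseBasis R M
      let bA := b.baseChange A
      refine ⟨Module.Free.of_basis bA, Module.Finite.of_basis bA, ?_⟩
      rw [Module.finrank_eq_card_basis bA, ← Module.finrank_eq_card_basis b]
      exact h3
  | n+1, M, _, _, c, h => by
      obtain ⟨a, f, hs, hk⟩ := h
      let fA : (A ⊗[R] (Fin a → R)) →ₗ[A] (A ⊗[R] M) := f.baseChange A
      let bpi : Basis (Fin a) A (A ⊗[R] (Fin a → R)) := (Pi.basisFun R (Fin a)).baseChange A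
      let e : (A ⊗[R] (Fin a → R)) ≃ₗ[A] (Fin a → A) := bpi.equivFun
      have hfA : Surjective fA := by
        have : Surjective (f.lTensor A) := LinearMap.lTensor_surjective A hs
        rwa [show (fA : A ⊗[R] (Fin a → R) → A ⊗[R] M) = f.lTensor A from
          LinearMap.baseChange_eq_ltensor f]
      refine ⟨a, fA ∘ₗ (e.symm : (Fin a → A) →ₗ[A] (A ⊗[R] (Fin a → R))), hfA.comp e.symm.surjective, ?_⟩
      -- kernel of fA ∘ e.symm ≃ A ⊗ ker f
      have hIH := ffrc_baseChange A n hk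
      refine ffrc_congr n ?_ hIH
      let j : (A ⊗[R] (ker f)) →ₗ[A] (A ⊗[R] (Fin a → R)) := (ker f).subtype.baseChange A
      have hjinj : Injective j := by
        have : Injective ((ker f).subtype.lTensor A) :=
          Module.Flat.lTensor_preserves_injective_linearMap _ Subtype.val_injective
        rwa [show (j : A ⊗[R] (ker f) → A ⊗[R] (Fin a → R)) = (ker f).subtype.lTensor A from
          LinearMap.baseChange_eq_ltensor _]
      have hex : Function.Exact j fA := by
        have := Module.Flat.lTensor_exact A (LinearMap.exact_subtype_ker_map f)
        rwa [show (j : A ⊗[R] (ker f) → A ⊗[R] (Fin a → R)) = (ker f).subtype.lTensor A from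
          LinearMap.baseChange_eq_ltensor _,
          show (fA : A ⊗[R] (Fin a → R) → A ⊗[R] M) = f.lTensor A from
          LinearMap.baseChange_eq_ltensor f]
      have hrange : range j = ker fA := (LinearMap.exact_iff.mp hex).symm
      exact ((LinearEquiv.ofInjective j hjinj).trans
        (LinearEquiv.ofEq _ _ hrange)).trans (kerCompEquiv fA e.symm).symm

end ABaux

namespace ABaux

open Module LinearMap Function IsLocalRing

lemma one_tmul_smul {A κ M : Type u} [CommRing A] [CommRing κ] [Algebra A κ]
    [AddCommGroup M] [Module A M] (w : A) (m : M) :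
    (algebraMap A κ w) • ((1:κ) ⊗ₜ[A] m) = (1:κ) ⊗ₜ[A] (w • m) := by
  rw [TensorProduct.smul_tmul', smul_eq_mul, mul_one, Algebra.algebraMap_eq_smul_one,
    TensorProduct.smul_tmul]

theorem ffrc_free_of_socle {A : Type u} [CommRing A] [IsLocalRing A] [IsNoetherianRing A]
    (z : A) (hz : z ≠ 0) (hzm : ∀ y ∈ maximalIdeal A, z * y = 0) :
    ∀ (n : ℕ) {N : Type u} [AddCommGroup N] [Module A N] {c : ℤ},
    FFRc A n N c → Module.Free A N ∧ Module.Finite A N ∧ c = (Module.finrank A N : ℤ)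
  | 0, N, _, _, c, h => h
  | n+1, N, _, _, c, h => by
      haveI : StrongRankCondition A := commRing_strongRankCondition A
      obtain ⟨a, s, hs, hk⟩ := h
      obtain ⟨hKfree, hKfin, hKc⟩ := ffrc_free_of_socle z hz hzm n hk
      haveI := hKfree; haveI := hKfin
      let φ : (ker s) →ₗ[A] (Fin a → A) := (ker s).subtype
      have hinj : Injective (φ.lTensor (ResidueField A)) := by
        rw [injective_iff_map_eq_zero]
        intro x hx
        set κ := ResidueField A with hκ
        have hres : ∀ w : A, residue A w = algebraMap A κ w := fun _ => rfl
        let bK := Module.finBasis A (ker s)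
        let bKκ := bK.baseChange κ
        have hlift : ∀ j, ∃ t : A, (residue A) t = bKκ.repr x j :=
          fun j => residue_surjective _
        choose t ht using hlift
        set v : ker s := ∑ j, t j • bK j with hv
        have hxv : x = (1 : κ) ⊗ₜ[A] v := by
          conv_lhs => rw [← bKκ.sum_repr x]
          rw [hv, TensorProduct.tmul_sum]
          congr 1
          ext j
          rw [← ht j, hres, Basis.baseChange_apply, one_tmul_smul]
        have hφv : (1 : κ) ⊗ₜ[A] (φ v) = 0 := by
          rw [← hx, hxv]; simp [φ]
        let bPiκ := (Pi.basisFun A (Fin a)).baseChange κ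
        have hcoord : ∀ i, φ v i ∈ maximalIdeal A := by
          have h1 : (1 : κ) ⊗ₜ[A] (φ v) = ∑ i, (residue A (φ v i)) • bPiκ i := by
            conv_lhs => rw [← Basis.sum_repr (Pi.basisFun A (Fin a)) (φ v)]
            rw [TensorProduct.tmul_sum]
            congr 1
            ext i
            rw [hres, Basis.baseChange_apply, one_tmul_smul]
            simp
          intro i
          rw [← Ideal.Quotient.eq_zero_iff_mem]
          have h2 : ∑ i, (residue A (φ v i)) • bPiκ i = 0 := by rw [← h1, hφv]
          have h3 := congrArg (fun y => bPiκ.repr y) h2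
          simp only [map_zero] at h3
          have h4 := Basis.repr_sum_self bPiκ (fun i => residue A (φ v i))
          rw [h3] at h4
          have h5 := (congrFun h4 i).symm
          simp at h5
          exact h5
        have hzv : z • v = 0 := by
          have h0 : φ (z • v) = 0 := by
            rw [map_smul]
            ext i
            exact hzm _ (hcoord i)
          have hφinj : Injective φ := Subtype.val_injective
          apply hφinj
          simpa using h0
        have hzt : ∀ j, z * t j = 0 := by
          have h5 : z • v = ∑ j, (z * t j) • bK j := by
            rw [hv, Finset.smul_sum]
            congr 1; ext j; rw [smul_smul]
          rw [h5] at hzv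
          have h6 := congrArg (fun y => bK.repr y) hzv
          simp only [map_zero] at h6
          intro j
          have h7 := Basis.repr_sum_self bK (fun j => z * t j)
          rw [h6] at h7
          simpa using (congrFun h7 j).symm
        have htm : ∀ j, t j ∈ maximalIdeal A := by
          intro j
          by_contra hmem
          have hu : IsUnit (t j) := by
            rwa [mem_maximalIdeal, mem_nonunits_iff, not_not] at hmem
          obtain ⟨u, hu'⟩ := hu
          apply hz
          have h8 : z * ↑u = 0 := by rw [hu']; exact hzt j
          calc z = z * ↑u * ↑u⁻¹ := by rw [mul_assoc, Units.mul_inv, mul_one]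
            _ = 0 := by rw [h8, zero_mul]
        have hcf0 : ∀ j, bKκ.repr x j = 0 := by
          intro j
          rw [← ht j, hres]
          exact Ideal.Quotient.eq_zero_iff_mem.mpr (htm j)
        rw [← bKκ.sum_repr x]
        apply Finset.sum_eq_zero
        intro j _
        rw [hcf0 j, zero_smul]
      haveI hNfree : Module.Free A N :=
        Module.free_of_lTensor_residueField_injective φ s hs
          (LinearMap.exact_subtype_ker_map s) hinj
      haveI hNfin : Module.Finite A N := Module.Finite.of_surjective s hs
      obtain ⟨σ, hσ⟩ := Module.projective_lifting_property s LinearMap.id hs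
      have hfr : finrank A (Fin a → A) = finrank A (N × (ker s)) :=
        (splitEquiv s σ hσ).finrank_eq
      rw [Module.finrank_pi, Module.finrank_prod] at hfr
      simp only [Fintype.card_fin] at hfr
      refine ⟨hNfree, hNfin, ?_⟩
      omega

end ABaux

namespace ABaux

open Module LinearMap Function IsLocalRing

variable {R : Type u} [CommRing R]

/-- The localization of a Noetherian ring at an associated prime has nonzero socle;
combined with the structure theorem this gives freeness of localized FFR modules. -/
theorem localized_free [IsNoetherianRing R] [IsLocalRing R]
    {M : Type u} [AddCommGroup M] [Module R M] {n : ℕ} {c : ℤ}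
    (hc : FFRc R n M c) (p : Ideal R) [hpp : p.IsPrime] (hp : IsAssociatedPrime p R) :
    Module.Free (Localization.AtPrime p) (LocalizedModule p.primeCompl M) ∧
    Module.Finite (Localization.AtPrime p) (LocalizedModule p.primeCompl M) ∧
    c = (Module.finrank (Localization.AtPrime p) (LocalizedModule p.primeCompl M) : ℤ) := by
  set A := Localization.AtPrime p with hA
  haveI : IsNoetherianRing A :=
    IsLocalization.isNoetherianRing p.primeCompl A inferInstance
  have h1 : FFRc A n (A ⊗[R] M) c := ffrc_baseChange A n hc
  have e : (A ⊗[R] M) ≃ₗ[A] LocalizedModule p.primeCompl M :=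
    (IsLocalizedModule.isBaseChange p.primeCompl A
      (LocalizedModule.mkLinearMap p.primeCompl M)).equiv
  have h2 : FFRc A n (LocalizedModule p.primeCompl M) c := ffrc_congr n e h1
  obtain ⟨hprime, y, hy⟩ := isAssociatedPrime_iff.mp hp
  have hyp : ∀ r ∈ p, r * y = 0 := by
    intro r hr
    rw [hy] at hr
    have := Submodule.mem_colon_singleton.mp hr
    simpa [smul_eq_mul] using this
  have hy0 : y ≠ 0 := by
    rintro rfl
    apply hprime.ne_top
    rw [hy]
    exact eq_top_iff.mpr fun r _ => Submodule.mem_colon_singleton.mpr (by simp)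
  set z : A := algebraMap R A y with hzdef
  have hz : z ≠ 0 := by
    intro h0
    obtain ⟨m, hm⟩ := (IsLocalization.map_eq_zero_iff p.primeCompl A y).mp h0
    have hmem : (m : R) ∈ (Submodule.span R {y}).annihilator := by
      rw [Submodule.mem_annihilator]
      intro w hw
      obtain ⟨r, rfl⟩ := Submodule.mem_span_singleton.mp hw
      rw [smul_comm]
      simp [smul_eq_mul, hm]
    replace hmem : (m : R) ∈ p := by
      have h := (Submodule.mem_colon_singleton (N := (⊥ : Submodule R R)) (x := y) (r := (m : R))).mpr (by simp [smul_eq_mul, hm])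
      rwa [← hy] at h
    exact m.2 hmem
  have hzm : ∀ q ∈ maximalIdeal A, z * q = 0 := by
    intro q hq
    obtain ⟨⟨r, s⟩, rfl⟩ := IsLocalization.mk'_surjective p.primeCompl q
    have hrp : r ∈ p := by
      by_contra hrp
      exact hq ((IsLocalization.AtPrime.isUnit_mk'_iff A p r s).mpr hrp)
    rw [hzdef, ← IsLocalization.mk'_one (M := p.primeCompl) A y,
      ← IsLocalization.mk'_mul]
    have h9 : y * r = 0 := by rw [mul_comm]; exact hyp r hrp
    rw [h9, IsLocalization.mk'_zero]
  exact ffrc_free_of_socle z hz hzm n h2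

end ABaux

namespace ABaux

open Module LinearMap Function IsLocalRing

variable {R : Type u} [CommRing R]

theorem forward [IsNoetherianRing R] [IsLocalRing R] (x : R) (hx : x ∈ maximalIdeal R)
    (hx0 : x ≠ 0) {n : ℕ} (hpd : pdLE R n (R ⧸ Ideal.span {x})) : IsSMulRegular R x := by
  set M := R ⧸ Ideal.span {x} with hM
  have hMfin : Module.Finite R M :=
    Module.Finite.of_surjective (Ideal.span {x}).mkQ (Submodule.mkQ_surjective _)
  obtain ⟨c, hc⟩ := ffrc_of_pdLE n hMfin hpd
  have hxM : ∀ m : M, x • m = 0 := by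
    intro m
    obtain ⟨r, rfl⟩ := Submodule.Quotient.mk_surjective _ m
    rw [← Submodule.Quotient.mk_smul]
    rw [Submodule.Quotient.mk_eq_zero]
    rw [smul_eq_mul]
    exact Ideal.mem_span_singleton'.mpr ⟨r, mul_comm r x⟩
  rcases eq_or_ne c 0 with hc0 | hc0
  · -- Euler characteristic zero: x is regular
    have key : ∀ d : R, x * d = 0 → d = 0 := by
      intro d hd
      by_contra hd0
      obtain ⟨p, hp, hple⟩ :=
        exists_le_isAssociatedPrime_of_isNoetherianRing (R := R) (M := R) d hd0
      haveI := hp.isPrime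
      obtain ⟨hfree, hfin, hrank⟩ := localized_free hc p hp
      haveI := hfree; haveI := hfin
      set A := Localization.AtPrime p with hA
      set N := LocalizedModule p.primeCompl M with hN
      have hr0 : Module.finrank A N = 0 := by
        rw [hc0] at hrank
        exact_mod_cast hrank.symm
      haveI : Subsingleton N := by
        have b := Module.finBasis A N
        rw [hr0] at b
        exact b.repr.toEquiv.subsingleton
      have h1 : (LocalizedModule.mk (Submodule.Quotient.mk (1:R) : M) (1 : p.primeCompl) : N)
          = LocalizedModule.mk 0 1 := Subsingleton.elim _ _
      obtain ⟨u, hu⟩ := LocalizedModule.mk_eq.mp h1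
      simp only [one_smul, smul_zero] at hu
      have hu' : (u : R) • (Submodule.Quotient.mk (1:R) : M) = 0 := hu
      rw [← Submodule.Quotient.mk_smul, Submodule.Quotient.mk_eq_zero, smul_eq_mul,
        mul_one] at hu'
      obtain ⟨t, ht⟩ := Ideal.mem_span_singleton'.mp hu'
      have hud : (u : R) * d = 0 := by
        rw [← ht, mul_assoc, hd, mul_zero]
      have hann : (u : R) ∈ (Submodule.span R {d}).annihilator := by
        rw [Submodule.mem_annihilator]
        intro w hw
        obtain ⟨r, rfl⟩ := Submodule.mem_span_singleton.mp hw
        rw [smul_comm, show (u : R) • d = 0 from by rw [smul_eq_mul, hud], smul_zero]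
      exact u.2 (hple (Submodule.mem_colon_singleton.mpr (by simp [smul_eq_mul, hud])))
    intro a b hab
    simp only [smul_eq_mul] at hab
    have : x * (a - b) = 0 := by rw [mul_sub, hab, sub_self]
    exact sub_eq_zero.mp (key _ this)
  · exfalso
    obtain ⟨p, hp, hple⟩ :=
      exists_le_isAssociatedPrime_of_isNoetherianRing (R := R) (M := R) x hx0
    haveI := hp.isPrime
    obtain ⟨hfree, hfin, hrank⟩ := localized_free hc p hp
    haveI := hfree; haveI := hfin
    set A := Localization.AtPrime p with hA
    set N := LocalizedModule p.primeCompl M with hN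
    have hxN : ∀ w : N, x • w = 0 := by
      intro w
      induction w using LocalizedModule.induction_on with
      | _ m s =>
        rw [LocalizedModule.smul'_mk, hxM m, LocalizedModule.zero_mk]
    have hrpos : Module.finrank A N ≠ 0 := by
      intro h
      rw [h] at hrank
      exact hc0 (by exact_mod_cast hrank)
    let b := Module.finBasis A N
    let i : Fin (Module.finrank A N) := ⟨0, Nat.pos_of_ne_zero hrpos⟩
    have halg : (algebraMap R A x) • b i = 0 := by
      rw [algebraMap_smul]; exact hxN _
    have h2 := congrArg b.repr halg
    rw [map_smul, map_zero, Basis.repr_self] at h2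
    have h3 := DFunLike.congr_fun h2 i
    simp only [Finsupp.smul_apply, Finsupp.single_eq_same, Finsupp.coe_zero,
      Pi.zero_apply, smul_eq_mul, mul_one] at h3
    obtain ⟨m, hm⟩ := (IsLocalization.map_eq_zero_iff p.primeCompl A x).mp h3
    have hann : (m : R) ∈ (Submodule.span R {x}).annihilator := by
      rw [Submodule.mem_annihilator]
      intro w hw
      obtain ⟨r, rfl⟩ := Submodule.mem_span_singleton.mp hw
      rw [smul_comm, show (m : R) • x = 0 from by rw [smul_eq_mul, hm], smul_zero]
    exact m.2 (hple (Submodule.mem_colon_singleton.mpr (by simp [smul_eq_mul, hm])))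

theorem backward [IsLocalRing R] (x : R) (hreg : IsSMulRegular R x) :
    pdLE R 1 (R ⧸ Ideal.span {x}) := by
  let f : R →ₗ[R] ↥(Ideal.span {x} : Ideal R) :=
    (LinearMap.toSpanSingleton R R x).codRestrict _
      (fun r => Submodule.smul_mem _ r (Submodule.mem_span_singleton_self x))
  have hfinj : Injective f := by
    intro r s h
    have h' : r • x = s • x := congrArg Subtype.val h
    simp only [smul_eq_mul] at h'
    apply hreg
    simp only [smul_eq_mul]
    rw [mul_comm x r, mul_comm x s, h']
  have hfsurj : Surjective f := by
    rintro ⟨w, hw⟩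
    obtain ⟨a, ha⟩ := Submodule.mem_span_singleton.mp hw
    exact ⟨a, Subtype.ext ha⟩
  let e : R ≃ₗ[R] ↥(Ideal.span {x} : Ideal R) := LinearEquiv.ofBijective f ⟨hfinj, hfsurj⟩
  have hker : pdLE R 0 (LinearMap.ker (Ideal.span {x} : Ideal R).mkQ) := by
    refine pdLE_congr 0 (e.trans (LinearEquiv.ofEq _ _ (Submodule.ker_mkQ _).symm)) ?_
    exact (inferInstance : Module.Projective R R)
  exact Or.inr ⟨R, inferInstance, inferInstance, (Ideal.span {x} : Ideal R).mkQ,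
    inferInstance, Submodule.mkQ_surjective _, hker⟩

end ABaux

/-- Over a Noetherian local ring, a nonzero `x` in the maximal ideal satisfies
`pd_R(R/xR) < ∞` iff `x` is a non zero-divisor. -/
theorem stmt_5 (R : Type u) [CommRing R] [IsNoetherianRing R] [IsLocalRing R]
    (x : R) (hx : x ∈ IsLocalRing.maximalIdeal R) (hx0 : x ≠ 0) :
    (∃ n, pdLE R n (R ⧸ Ideal.span {x})) ↔ IsSMulRegular R x := by
  constructor
  · rintro ⟨n, hn⟩
    exact ABaux.forward x hx hx0 hn
  · intro hreg
    exact ⟨1, ABaux.backward x hreg⟩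
end

section
/- Let (R, m) be a commutative Noetherian local ring and M a finitely generated R-module. If there exists a nonzero finitely generated R-module N such that Ext^1_R(M, Ω_R(M ⊗_R N)) = 0, where Ω_R denotes the first syzygy in a projective cover (minimal free presentation), then M is free. -/
universe u
open TensorProduct

variable (R : Type u) [CommRing R]

section Stmt11Aux

variable {X : Type u} [AddCommGroup X] [Module R X]

lemma stmt11_quot_mk_smul (I : Ideal R) (r : R) (v : X ⧸ (I • ⊤ : Submodule R X)) :
    (Ideal.Quotient.mk I r) • v = r • v := rfl

lemma stmt11_smul_top_quot_eq_bot (I : Ideal R) :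
    (I • ⊤ : Submodule R (X ⧸ (I • ⊤ : Submodule R X))) = ⊥ := by
  rw [eq_bot_iff]
  refine Submodule.smul_le.2 fun r hr v _ => ?_
  obtain ⟨y, rfl⟩ := Submodule.Quotient.mk_surjective _ v
  rw [← Submodule.Quotient.mk_smul, Submodule.mem_bot, Submodule.Quotient.mk_eq_zero]
  exact Submodule.smul_mem_smul hr trivial

open CategoryTheory in
lemma stmt11_lift_of_extVanish
    (M T F : Type u) [AddCommGroup M] [Module R M] [AddCommGroup T] [Module R T]
    [AddCommGroup F] [Module R F]
    (f : F →ₗ[R] T) (hf : Function.Surjective f)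
    (hext : ExtVanish R 1 M (LinearMap.ker f))
    (φ : M →ₗ[R] T) : ∃ ψ : M →ₗ[R] F, f.comp ψ = φ := by
  classical
  set Mc : ModuleCat.{u} R := ModuleCat.of R M with hMc
  set Tc : ModuleCat.{u} R := ModuleCat.of R T with hTc
  set Fc : ModuleCat.{u} R := ModuleCat.of R F with hFc
  set Kc : ModuleCat.{u} R := ModuleCat.of R (LinearMap.ker f) with hKc
  let P : ProjectiveResolution Mc := (HasProjectiveResolution.out (Z := Mc)).some
  let fc : Fc ⟶ Tc := ModuleCat.ofHom f
  have hepi : Epi fc := (ModuleCat.epi_iff_surjective fc).2 hf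
  let φc : Mc ⟶ Tc := ModuleCat.ofHom φ
  let α : P.complex.X 0 ⟶ Fc := Projective.factorThru (P.π.f 0 ≫ φc) fc
  have hα : α ≫ fc = P.π.f 0 ≫ φc := Projective.factorThru_comp _ _
  have h0 : (P.complex.d 1 0 ≫ α) ≫ fc = 0 := by
    rw [Category.assoc, hα]
    exact (P.complex_d_comp_π_f_zero_assoc _).trans Limits.zero_comp
  have hmem : ∀ x : P.complex.X 1, ((P.complex.d 1 0 ≫ α) x) ∈ LinearMap.ker f := by
    intro x
    have := congrFun (congrArg (fun (g : P.complex.X 1 ⟶ Tc) => (g : P.complex.X 1 → Tc)) h0) x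
    simpa [LinearMap.mem_ker, fc] using this
  let ι : Kc ⟶ Fc := ModuleCat.ofHom (LinearMap.ker f).subtype
  have hmono : Mono ι := (ModuleCat.mono_iff_injective ι).2 (Submodule.injective_subtype _)
  let β : P.complex.X 1 ⟶ Kc :=
    ModuleCat.ofHom (LinearMap.codRestrict (LinearMap.ker f)
      (P.complex.d 1 0 ≫ α).hom hmem)
  have hβι : β ≫ ι = P.complex.d 1 0 ≫ α := rfl
  have hcoc : P.complex.d 2 1 ≫ β = 0 := by
    rw [← cancel_mono ι, Category.assoc, hβι, Limits.zero_comp,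
      ← Category.assoc, P.complex.d_comp_d, Limits.zero_comp]
  -- exactness of the Hom complex at degree 1
  have hz : Limits.IsZero (((Ext R (ModuleCat.{u} R) 1).obj (Opposite.op Mc)).obj Kc) :=
    @ModuleCat.isZero_of_subsingleton _ _ _ hext
  have hzh : Limits.IsZero ((P.complex.linearYonedaObj R Kc).homology 1) :=
    hz.of_iso (P.isoExt 1 Kc).symm
  have hexact : (P.complex.linearYonedaObj R Kc).ExactAt 1 :=
    (HomologicalComplex.exactAt_iff_isZero_homology _ 1).2 hzh
  rw [HomologicalComplex.exactAt_iff' _ 0 1 2 (by simp) (by simp)] at hexact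
  rw [ShortComplex.moduleCat_exact_iff] at hexact
  obtain ⟨γ, hγ⟩ := hexact β (by
    show (P.complex.linearYonedaObj R Kc).d 1 2 β = 0
    simp only [ChainComplex.linearYonedaObj_d]
    exact hcoc)
  have hγ' : P.complex.d 1 0 ≫ γ = β := hγ
  set α' : P.complex.X 0 ⟶ Fc := α - γ ≫ ι with hα'
  have hd : P.complex.d 1 0 ≫ α' = 0 := by
    rw [hα', Preadditive.comp_sub]
    erw [← Category.assoc, hγ', hβι, sub_self]
  obtain ⟨ψc, hψc⟩ := Limits.CokernelCofork.IsColimit.desc' P.isColimitCokernelCofork α' hd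
  have hψc' : P.π.f 0 ≫ ψc = α' := hψc
  have hι : ι ≫ fc = 0 := by
    apply ModuleCat.hom_ext
    apply LinearMap.ext
    intro x
    exact x.2
  have hcomp : ψc ≫ fc = φc := by
    erw [← cancel_epi (P.π.f 0), ← Category.assoc, hψc', hα', Preadditive.sub_comp,
      Category.assoc, hι, Limits.comp_zero, sub_zero, hα]
  exact ⟨ψc.hom, congrArg ModuleCat.Hom.hom hcomp⟩

variable [IsLocalRing R]

/-- If `x ∉ 𝔪N` and `m ⊗ x ∈ 𝔪(M ⊗ N)` then `m ∈ 𝔪M`. -/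
lemma stmt11_mem_smul_of_tmul_mem {M N : Type u} [AddCommGroup M] [Module R M]
    [AddCommGroup N] [Module R N]
    {x : N} (hx : x ∉ (IsLocalRing.maximalIdeal R • ⊤ : Submodule R N)) (m : M)
    (hm : m ⊗ₜ[R] x ∈ (IsLocalRing.maximalIdeal R • ⊤ : Submodule R (M ⊗[R] N))) :
    m ∈ (IsLocalRing.maximalIdeal R • ⊤ : Submodule R M) := by
  classical
  letI K : Type u := R ⧸ IsLocalRing.maximalIdeal R
  letI : Field K := Ideal.Quotient.field (IsLocalRing.maximalIdeal R)
  set Nb := N ⧸ (IsLocalRing.maximalIdeal R • ⊤ : Submodule R N) with hNb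
  set Mb := M ⧸ (IsLocalRing.maximalIdeal R • ⊤ : Submodule R M) with hMb
  have hxb : (Submodule.Quotient.mk x : Nb) ≠ 0 := by
    rw [Ne, Submodule.Quotient.mk_eq_zero]; exact hx
  obtain ⟨lam₀, hlam₀⟩ : ∃ lam₀ : Module.Dual K Nb, lam₀ (Submodule.Quotient.mk x) ≠ 0 := by
    by_contra hc
    push_neg at hc
    exact hxb ((Module.forall_dual_apply_eq_zero_iff K _).1 hc)
  set lam : Module.Dual K Nb := (lam₀ (Submodule.Quotient.mk x))⁻¹ • lam₀ with hlam
  have hlam1 : lam (Submodule.Quotient.mk x) = 1 := by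
    rw [hlam, LinearMap.smul_apply, smul_eq_mul, inv_mul_cancel₀ hlam₀]
  -- the bilinear map (a, n) ↦ lam (n̄) • ā
  let B : M →ₗ[R] N →ₗ[R] Mb :=
    { toFun := fun a =>
      { toFun := fun n => lam (Submodule.Quotient.mk n) • (Submodule.Quotient.mk a : Mb)
        map_add' := fun n₁ n₂ => by
          simp [Submodule.Quotient.mk_add, add_smul]
        map_smul' := fun r n => by
          show lam (Submodule.Quotient.mk (r • n)) • (Submodule.Quotient.mk a : Mb)
            = (RingHom.id R) r •
              (lam (Submodule.Quotient.mk n) • (Submodule.Quotient.mk a : Mb))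
          rw [Submodule.Quotient.mk_smul,
            ← stmt11_quot_mk_smul R (IsLocalRing.maximalIdeal R) r, map_smul, smul_eq_mul,
            mul_smul, stmt11_quot_mk_smul, RingHom.id_apply] }
      map_add' := fun a₁ a₂ => by
        apply LinearMap.ext; intro n
        simp [Submodule.Quotient.mk_add, smul_add]
      map_smul' := fun r a => by
        apply LinearMap.ext; intro n
        simp only [LinearMap.coe_mk, AddHom.coe_mk, RingHom.id_apply, LinearMap.smul_apply]
        rw [Submodule.Quotient.mk_smul,
          ← stmt11_quot_mk_smul R (IsLocalRing.maximalIdeal R) r, smul_comm,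
          stmt11_quot_mk_smul] }
  have h1 : (TensorProduct.lift B) (m ⊗ₜ[R] x) = (Submodule.Quotient.mk m : Mb) := by
    rw [TensorProduct.lift.tmul]
    show lam (Submodule.Quotient.mk x) • (Submodule.Quotient.mk m : Mb) = _
    rw [hlam1, one_smul]
  have h2 : (Submodule.Quotient.mk m : Mb) ∈
      (IsLocalRing.maximalIdeal R • ⊤ : Submodule R Mb) := by
    rw [← h1]
    have h3 : (TensorProduct.lift B) (m ⊗ₜ[R] x) ∈
        (Submodule.map (TensorProduct.lift B)
          (IsLocalRing.maximalIdeal R • (⊤ : Submodule R (M ⊗[R] N)))) :=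
      Submodule.mem_map_of_mem hm
    rw [Submodule.map_smul''] at h3
    exact Submodule.smul_mono le_rfl le_top h3
  rw [stmt11_smul_top_quot_eq_bot, Submodule.mem_bot] at h2
  rwa [Submodule.Quotient.mk_eq_zero] at h2

theorem stmt11_aux_free [IsNoetherianRing R]
    (M : Type u) [AddCommGroup M] [Module R M] [Module.Finite R M]
    (N : Type u) [AddCommGroup N] [Module R N]
    (F : Type u) [AddCommGroup F] [Module R F] [Module.Free R F]
    (f : F →ₗ[R] (M ⊗[R] N))
    (ψ : M →ₗ[R] F) (x : N)
    (hx : x ∉ (IsLocalRing.maximalIdeal R • ⊤ : Submodule R N))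
    (hψ : f.comp ψ = (TensorProduct.mk R M N).flip x) :
    Module.Free R M := by
  classical
  have hjac : IsLocalRing.maximalIdeal R ≤ (⊥ : Ideal R).jacobson :=
    (IsLocalRing.jacobson_eq_maximalIdeal (⊥ : Ideal R) bot_ne_top).ge
  have hinj : ∀ m : M, ψ m ∈ (IsLocalRing.maximalIdeal R • ⊤ : Submodule R F) →
      m ∈ (IsLocalRing.maximalIdeal R • ⊤ : Submodule R M) := by
    intro m hmem
    apply stmt11_mem_smul_of_tmul_mem R hx m
    have h1 : f (ψ m) ∈
        (IsLocalRing.maximalIdeal R • ⊤ : Submodule R (M ⊗[R] N)) := by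
      have h2 := Submodule.mem_map_of_mem (f := f) hmem
      rw [Submodule.map_smul''] at h2
      exact Submodule.smul_mono le_rfl le_top h2
    rwa [show f (ψ m) = m ⊗ₜ[R] x from by
      rw [← LinearMap.comp_apply, hψ]; rfl] at h1
  letI K : Type u := R ⧸ IsLocalRing.maximalIdeal R
  letI : Field K := Ideal.Quotient.field (IsLocalRing.maximalIdeal R)
  set Mb := M ⧸ (IsLocalRing.maximalIdeal R • ⊤ : Submodule R M) with hMb
  set Fb := F ⧸ (IsLocalRing.maximalIdeal R • ⊤ : Submodule R F) with hFb
  have hmapψ : (IsLocalRing.maximalIdeal R • ⊤ : Submodule R M) ≤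
      Submodule.comap ψ (IsLocalRing.maximalIdeal R • ⊤ : Submodule R F) := by
    intro y hy
    have h2 := Submodule.mem_map_of_mem (f := ψ) hy
    rw [Submodule.map_smul''] at h2
    exact Submodule.smul_mono le_rfl le_top h2
  let ψbR : Mb →ₗ[R] Fb := Submodule.mapQ _ _ ψ hmapψ
  let ψb : Mb →ₗ[K] Fb :=
    { toFun := ψbR
      map_add' := map_add _
      map_smul' := fun c v => by
        obtain ⟨r, rfl⟩ := Ideal.Quotient.mk_surjective c
        show ψbR ((Ideal.Quotient.mk (IsLocalRing.maximalIdeal R) r) • v)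
          = (RingHom.id K) (Ideal.Quotient.mk (IsLocalRing.maximalIdeal R) r) • ψbR v
        rw [RingHom.id_apply, stmt11_quot_mk_smul, map_smul, stmt11_quot_mk_smul] }
  have hψb_inj : LinearMap.ker ψb = ⊥ := by
    rw [eq_bot_iff]
    intro v hv
    obtain ⟨m, rfl⟩ := Submodule.Quotient.mk_surjective _ v
    rw [LinearMap.mem_ker] at hv
    have h3 : ψbR (Submodule.Quotient.mk m) = 0 := hv
    rw [Submodule.mapQ_apply, Submodule.Quotient.mk_eq_zero] at h3
    rw [Submodule.mem_bot, Submodule.Quotient.mk_eq_zero]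
    exact hinj m h3
  obtain ⟨ρb, hρb⟩ := LinearMap.exists_leftInverse_of_injective ψb hψb_inj
  let ρbR : Fb →ₗ[R] Mb :=
    { toFun := ρb
      map_add' := map_add _
      map_smul' := fun r v => by
        show ρb (r • v) = (RingHom.id R) r • ρb v
        rw [RingHom.id_apply, ← stmt11_quot_mk_smul R (IsLocalRing.maximalIdeal R) r,
          map_smul, stmt11_quot_mk_smul] }
  obtain ⟨ρ, hρ⟩ := Module.projective_lifting_property
    ((IsLocalRing.maximalIdeal R • ⊤ : Submodule R M).mkQ)
    (ρbR.comp (IsLocalRing.maximalIdeal R • ⊤ : Submodule R F).mkQ)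
    (Submodule.mkQ_surjective _)
  set θ : M →ₗ[R] M := ρ.comp ψ with hθdef
  have hθ : ∀ m : M,
      (Submodule.Quotient.mk (θ m) : Mb) = (Submodule.Quotient.mk m : Mb) := by
    intro m
    have h1 := DFunLike.congr_fun hρ (ψ m)
    simp only [LinearMap.comp_apply] at h1
    have h2 : (Submodule.Quotient.mk (ψ m) : Fb) = ψb (Submodule.Quotient.mk m) := by
      show _ = ψbR _
      rw [Submodule.mapQ_apply]
    have h3 := DFunLike.congr_fun hρb (Submodule.Quotient.mk m : Mb)
    show ((IsLocalRing.maximalIdeal R • ⊤ : Submodule R M).mkQ) (ρ (ψ m)) = _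
    rw [h1]
    show ρbR (((IsLocalRing.maximalIdeal R • ⊤ : Submodule R F).mkQ) (ψ m)) = _
    show ρb (((IsLocalRing.maximalIdeal R • ⊤ : Submodule R F).mkQ) (ψ m)) = _
    rw [show (((IsLocalRing.maximalIdeal R • ⊤ : Submodule R F).mkQ) (ψ m) : Fb)
      = ψb (Submodule.Quotient.mk m) from h2]
    exact h3
  have hsurj : Function.Surjective θ := by
    rw [← LinearMap.range_eq_top]
    have hle : (⊤ : Submodule R M) ≤ LinearMap.range θ ⊔
        (IsLocalRing.maximalIdeal R • ⊤ : Submodule R M) := by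
      intro m _
      have hmem : m - θ m ∈ (IsLocalRing.maximalIdeal R • ⊤ : Submodule R M) := by
        rw [← Submodule.Quotient.mk_eq_zero, Submodule.Quotient.mk_sub, hθ, sub_self]
      have h4 : m = θ m + (m - θ m) := by abel
      rw [h4]
      exact Submodule.add_mem_sup (LinearMap.mem_range_self θ m) hmem
    exact top_le_iff.1 (Submodule.le_of_le_smul_of_le_jacobson_bot
      Module.Finite.fg_top hjac hle)
  have hinj' : Function.Injective θ :=
    OrzechProperty.injective_of_surjective_endomorphism θ hsurj
  let e := LinearEquiv.ofBijective θ ⟨hinj', hsurj⟩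
  have hproj : Module.Projective R M := by
    refine Module.Projective.of_split ψ ((e.symm : M →ₗ[R] M).comp ρ) ?_
    apply LinearMap.ext
    intro m
    show e.symm (ρ (ψ m)) = m
    have h5 : ρ (ψ m) = e m := rfl
    rw [h5, LinearEquiv.symm_apply_apply]
  have : Module.FinitePresentation R M := Module.finitePresentation_of_finite R M
  exact Module.free_of_flat_of_isLocalRing

end Stmt11Aux

/-- If `Ext^1_R(M, Ω(M ⊗ N)) = 0` for some nonzero `N`, where `Ω` is the syzygy
in a minimal free presentation, then `M` is free. -/
theorem stmt_11 (R : Type u) [CommRing R] [IsNoetherianRing R] [IsLocalRing R]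
    (M : Type u) [AddCommGroup M] [Module R M] [Module.Finite R M]
    (h : ∃ (N : Type u) (_ : AddCommGroup N) (_ : Module R N)
      (_ : Module.Finite R N) (_ : Nontrivial N)
      (F : Type u) (_ : AddCommGroup F) (_ : Module R F)
      (_ : Module.Free R F) (_ : Module.Finite R F)
      (f : F →ₗ[R] (M ⊗[R] N)),
      Function.Surjective f ∧
      LinearMap.ker f ≤ (IsLocalRing.maximalIdeal R) • (⊤ : Submodule R F) ∧
      ExtVanish R 1 M (LinearMap.ker f)) :
    Module.Free R M := by
  classical
  obtain ⟨N, iN1, iN2, iN3, iN4, F, iF1, iF2, iF3, iF4, f, hf, hker, hext⟩ := h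
  have hjac : IsLocalRing.maximalIdeal R ≤ (⊥ : Ideal R).jacobson :=
    (IsLocalRing.jacobson_eq_maximalIdeal (⊥ : Ideal R) bot_ne_top).ge
  obtain ⟨x, hx⟩ : ∃ x : N, x ∉ (IsLocalRing.maximalIdeal R • ⊤ : Submodule R N) := by
    by_contra hc
    push_neg at hc
    have htop : (IsLocalRing.maximalIdeal R • ⊤ : Submodule R N) = ⊤ :=
      eq_top_iff.2 fun y _ => hc y
    have hbot := Submodule.eq_bot_of_le_smul_of_le_jacobson_bot
      (IsLocalRing.maximalIdeal R) (⊤ : Submodule R N) Module.Finite.fg_top htop.ge hjac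
    obtain ⟨y, hy⟩ := exists_ne (0 : N)
    have hy2 : y ∈ (⊥ : Submodule R N) := hbot ▸ Submodule.mem_top
    exact hy (by simpa using hy2)
  obtain ⟨ψ, hψ⟩ := stmt11_lift_of_extVanish R M (M ⊗[R] N) F f hf hext
    ((TensorProduct.mk R M N).flip x)
  exact stmt11_aux_free R M N F f ψ x hx hψ
end

section
/- Let R be a commutative ring, A and B R-modules, and suppose there is an exact sequence 0 → A^{n_r} → ⋯ → A^{n_1} → A^{n_0} → B → 0 of R-modules with n_i ≥ 0. If M is an R-module with Ext^i_R(M, A) = 0 for all i = 1, ..., r+1, then Ext^1_R(M, B) = 0. -/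
universe u
open TensorProduct

variable (R : Type u) [CommRing R]

section Aux
open CategoryTheory Limits
noncomputable section
variable {R : Type u} [CommRing R]

-- map of hom complexes
def mapCx {M : ModuleCat.{u} R} (P : CategoryTheory.ProjectiveResolution M)
    {Y Z : ModuleCat.{u} R} (f : Y ⟶ Z) :
    P.complex.linearYonedaObj R Y ⟶ P.complex.linearYonedaObj R Z where
  f k := ModuleCat.ofHom (Linear.rightComp R _ f)
  comm' i j hij := by
    ext φ
    exact (Category.assoc (P.complex.d j i) φ f).symm

end
noncomputable section
variable {R : Type u} [CommRing R]

lemma subsingleton_of_exact (S : ShortComplex (ModuleCat.{u} R)) (hS : S.Exact)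
    (h1 : Subsingleton S.X₁) (h3 : Subsingleton S.X₃) : Subsingleton S.X₂ := by
  rw [ShortComplex.moduleCat_exact_iff] at hS
  constructor
  intro a b
  have ha := hS a (Subsingleton.elim _ _)
  have hb := hS b (Subsingleton.elim _ _)
  obtain ⟨x, rfl⟩ := ha
  obtain ⟨y, rfl⟩ := hb
  rw [Subsingleton.elim x y]

lemma subsingleton_of_iso {X Y : ModuleCat.{u} R} (e : X ≅ Y) (h : Subsingleton X) :
    Subsingleton Y :=
  ((forget (ModuleCat R)).mapIso e).toEquiv.symm.subsingleton

-- degreewise short exact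
lemma mapCx_shortExact {M : ModuleCat.{u} R} (P : CategoryTheory.ProjectiveResolution M)
    (S : ShortComplex (ModuleCat.{u} R)) (hS : S.ShortExact) :
    (ShortComplex.mk (mapCx P S.f) (mapCx P S.g)
      (by ext k φ; change ((φ : P.complex.X k ⟶ S.X₁) ≫ S.f) ≫ S.g = _; erw [Category.assoc, S.zero, comp_zero]; rfl)).ShortExact := by
  have := hS.mono_f
  have := hS.epi_g
  apply HomologicalComplex.shortExact_of_degreewise_shortExact
  intro k
  refine ShortComplex.ShortExact.mk' ?_ ?_ ?_
  · rw [ShortComplex.moduleCat_exact_iff]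
    intro φ hφ
    exact ⟨hS.exact.liftFromProjective φ hφ, hS.exact.liftFromProjective_comp φ hφ⟩
  · rw [ModuleCat.mono_iff_injective]
    intro a b hab
    exact (cancel_mono S.f).mp hab
  · rw [ModuleCat.epi_iff_surjective]
    intro ψ
    exact ⟨Projective.factorThru ψ S.g, Projective.factorThru_comp ψ S.g⟩
end
noncomputable section
variable {R : Type u} [CommRing R]

lemma subsingleton_of_isZero {X : ModuleCat.{u} R} (h : IsZero X) : Subsingleton X := by
  constructor
  intro a b
  have h1 : 𝟙 X = 0 := h.eq_of_src _ _
  have : ∀ x : X, (𝟙 X : X ⟶ X) x = (0 : X ⟶ X) x := fun x => by rw [h1]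
  simpa using (this a).trans (this b).symm

lemma extStep₃ (M : ModuleCat.{u} R) (S : ShortComplex (ModuleCat.{u} R)) (hS : S.ShortExact)
    (i : ℕ)
    (h2 : Subsingleton (((Ext R (ModuleCat.{u} R) i).obj (Opposite.op M)).obj S.X₂))
    (h1 : Subsingleton (((Ext R (ModuleCat.{u} R) (i+1)).obj (Opposite.op M)).obj S.X₁)) :
    Subsingleton (((Ext R (ModuleCat.{u} R) i).obj (Opposite.op M)).obj S.X₃) := by
  obtain ⟨P⟩ := (inferInstance : HasProjectiveResolution M).out
  have hT := mapCx_shortExact P S hS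
  have hex := hT.homology_exact₃ i (i+1) rfl
  exact subsingleton_of_iso (P.isoExt i S.X₃).symm
    (subsingleton_of_exact _ hex
      (subsingleton_of_iso (P.isoExt i S.X₂) h2)
      (subsingleton_of_iso (P.isoExt (i+1) S.X₁) h1))

lemma extStep₂ (M : ModuleCat.{u} R) (S : ShortComplex (ModuleCat.{u} R)) (hS : S.ShortExact)
    (i : ℕ)
    (h1 : Subsingleton (((Ext R (ModuleCat.{u} R) i).obj (Opposite.op M)).obj S.X₁))
    (h3 : Subsingleton (((Ext R (ModuleCat.{u} R) i).obj (Opposite.op M)).obj S.X₃)) :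
    Subsingleton (((Ext R (ModuleCat.{u} R) i).obj (Opposite.op M)).obj S.X₂) := by
  obtain ⟨P⟩ := (inferInstance : HasProjectiveResolution M).out
  have hT := mapCx_shortExact P S hS
  have hex := hT.homology_exact₂ i
  exact subsingleton_of_iso (P.isoExt i S.X₂).symm
    (subsingleton_of_exact _ hex
      (subsingleton_of_iso (P.isoExt i S.X₁) h1)
      (subsingleton_of_iso (P.isoExt i S.X₃) h3))

lemma extVanish_of_subsingleton' (M N : ModuleCat.{u} R) (hN : Subsingleton N) (i : ℕ) :
    Subsingleton (((Ext R (ModuleCat.{u} R) i).obj (Opposite.op M)).obj N) := by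
  obtain ⟨P⟩ := (inferInstance : HasProjectiveResolution M).out
  refine subsingleton_of_iso (P.isoExt i N).symm (subsingleton_of_isZero ?_)
  rw [← HomologicalComplex.exactAt_iff_isZero_homology, HomologicalComplex.exactAt_iff]
  refine ShortComplex.exact_of_isZero_X₂ _ ?_
  have : Subsingleton ((P.complex.linearYonedaObj R N).X i) := by
    constructor
    intro f g
    show (f : P.complex.X i ⟶ N) = g
    exact ModuleCat.hom_ext (LinearMap.ext fun x => Subsingleton.elim _ _)
  show IsZero ((P.complex.linearYonedaObj R N).X i)
  exact ModuleCat.isZero_of_subsingleton _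
end
noncomputable section
variable {R : Type u} [CommRing R]

lemma extVanish_pi (M A : Type u) [AddCommGroup M] [Module R M] [AddCommGroup A] [Module R A]
    (i : ℕ)
    (h : Subsingleton (((Ext R (ModuleCat.{u} R) i).obj
      (Opposite.op (ModuleCat.of R M))).obj (ModuleCat.of R A))) (m : ℕ) :
    Subsingleton (((Ext R (ModuleCat.{u} R) i).obj
      (Opposite.op (ModuleCat.of R M))).obj (ModuleCat.of R (Fin m → A))) := by
  induction m with
  | zero => exact extVanish_of_subsingleton' _ _ (by infer_instance) i
  | succ m ih =>
      set f : (Fin m → A) →ₗ[R] (Fin (m+1) → A) :=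
        LinearMap.pi (fun k => Fin.cases 0 (fun j => LinearMap.proj j) k) with hf
      have hfap : ∀ (x : Fin m → A) (j : Fin m), f x j.succ = x j := by
        intro x j
        simp [hf, LinearMap.pi_apply]
      have hfap0 : ∀ (x : Fin m → A), f x 0 = 0 := by
        intro x
        simp [hf, LinearMap.pi_apply]
      set g : (Fin (m+1) → A) →ₗ[R] A := LinearMap.proj 0 with hg
      have w : g.comp f = 0 := by
        ext x
        simp [hg, hfap0]
      set S : ShortComplex (ModuleCat.{u} R) :=
        ShortComplex.moduleCatMk (X₁ := Fin m → A) (X₂ := Fin (m+1) → A) (X₃ := A) f g w with hS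
      have hSE : S.ShortExact := by
        refine ShortComplex.ShortExact.mk' ?_ ?_ ?_
        · rw [ShortComplex.moduleCat_exact_iff]
          intro y hy
          have hy' : y 0 = 0 := hy
          refine ⟨fun j => y j.succ, funext fun k => ?_⟩
          show f (fun j => y j.succ) k = y k
          refine Fin.cases ?_ ?_ k
          · rw [hfap0]; exact hy'.symm
          · intro j; exact hfap _ j
        · rw [ModuleCat.mono_iff_injective]
          intro a b hab
          have hab' : f a = f b := hab
          funext j
          rw [← hfap a j, ← hfap b j]
          exact congrFun hab' j.succ
        · rw [ModuleCat.epi_iff_surjective]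
          intro a
          exact ⟨Fin.cons a 0, rfl⟩
      exact extStep₂ (ModuleCat.of R M) S hSE i ih h
end

end Aux

/-- Given an exact sequence `0 → A^{n_r} → ⋯ → A^{n_0} → B → 0`, if
`Ext^i(M,A) = 0` for `i = 1,…,r+1`, then `Ext^1(M,B) = 0`. -/

theorem stmt_12 (R : Type u) [CommRing R]
    (A B M : Type u) [AddCommGroup A] [Module R A] [AddCommGroup B] [Module R B]
    [AddCommGroup M] [Module R M]
    (r : ℕ) (n : ℕ → ℕ) (hn : ∀ i, r < i → n i = 0)
    (d : ∀ i : ℕ, ((Fin (n (i+1)) → A) →ₗ[R] (Fin (n i) → A)))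
    (g : (Fin (n 0) → A) →ₗ[R] B)
    (hg : Function.Surjective g)
    (h0 : Function.Exact (d 0) g)
    (hd : ∀ i, Function.Exact (d (i+1)) (d i))
    (hext : ∀ i, 1 ≤ i → i ≤ r + 1 → ExtVanish R i M A) :
    ExtVanish R 1 M B := by
  classical
  -- the kernels
  let K : ∀ j : ℕ, Submodule R (Fin (n j) → A) := fun j =>
    match j with
    | 0 => LinearMap.ker g
    | j' + 1 => LinearMap.ker (d j')
  have hK : ∀ j, LinearMap.range (d j) = K j := by
    intro j
    match j with
    | 0 => exact (LinearMap.exact_iff.mp h0).symm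
    | j' + 1 => exact (LinearMap.exact_iff.mp (hd j')).symm
  -- short exact sequences 0 → K (j+1) → A^{n (j+1)} → K j → 0
  have memK : ∀ j (x : Fin (n (j+1)) → A), d j x ∈ K j := fun j x =>
    hK j ▸ LinearMap.mem_range_self _ x
  let SES : ℕ → CategoryTheory.ShortComplex (ModuleCat.{u} R) := fun j =>
    CategoryTheory.ShortComplex.moduleCatMk (X₁ := ↥(K (j+1))) (X₂ := Fin (n (j+1)) → A)
      (X₃ := ↥(K j)) (K (j+1)).subtype ((d j).codRestrict (K j) (memK j))
      (by ext ⟨x, hx⟩ i; exact congrFun (show d j x = 0 from hx) i)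
  have hSES : ∀ j, (SES j).ShortExact := by
    intro j
    refine CategoryTheory.ShortComplex.ShortExact.mk' ?_ ?_ ?_
    · rw [CategoryTheory.ShortComplex.moduleCat_exact_iff]
      intro x hx
      have hx' : d j x = 0 := congrArg Subtype.val hx
      exact ⟨⟨x, hx'⟩, rfl⟩
    · rw [ModuleCat.mono_iff_injective]
      exact Subtype.val_injective
    · rw [ModuleCat.epi_iff_surjective]
      rintro ⟨y, hy⟩
      rw [← hK j] at hy
      obtain ⟨x, hx⟩ := hy
      exact ⟨x, Subtype.ext hx⟩
  -- K r is trivial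
  have hKr : Subsingleton ↥(K r) := by
    have h1 : n (r+1) = 0 := hn (r+1) (Nat.lt_succ_self r)
    have : IsEmpty (Fin (n (r+1))) := by rw [h1]; exact Fin.isEmpty
    constructor
    rintro ⟨a, ha⟩ ⟨b, hb⟩
    rw [← hK r] at ha hb
    obtain ⟨x, rfl⟩ := ha
    obtain ⟨y, rfl⟩ := hb
    have hxy : x = y := funext fun i => (this.false i).elim
    exact Subtype.ext (congrArg (d r) hxy)
  -- downward induction
  have claim : ∀ k j, j + k = r → ExtVanish R (j+2) M ↥(K j) := by
    intro k
    induction k with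
    | zero =>
        intro j hj
        rw [Nat.add_zero] at hj
        subst hj
        exact extVanish_of_subsingleton' _ _ hKr _
    | succ k ih =>
        intro j hj
        have hjr : j < r := by omega
        refine extStep₃ (ModuleCat.of R M) (SES j) (hSES j) (j+2) ?_ ?_
        · exact extVanish_pi M A (j+2) (hext (j+2) (by omega) (by omega)) (n (j+1))
        · exact ih (j+1) (by omega)
  have C0 : ExtVanish R 2 M ↥(K 0) := claim r 0 (Nat.zero_add r)
  -- final short exact sequence 0 → K 0 → A^{n 0} → B → 0
  let SB : CategoryTheory.ShortComplex (ModuleCat.{u} R) :=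
    CategoryTheory.ShortComplex.moduleCatMk (X₁ := ↥(K 0)) (X₂ := Fin (n 0) → A)
      (X₃ := B) (K 0).subtype g
      (by ext ⟨x, hx⟩; exact hx)
  have hSB : SB.ShortExact := by
    refine CategoryTheory.ShortComplex.ShortExact.mk' ?_ ?_ ?_
    · rw [CategoryTheory.ShortComplex.moduleCat_exact_iff]
      intro x hx
      exact ⟨⟨x, hx⟩, rfl⟩
    · rw [ModuleCat.mono_iff_injective]
      exact Subtype.val_injective
    · rw [ModuleCat.epi_iff_surjective]
      exact hg
  exact extStep₃ (ModuleCat.of R M) SB hSB 1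
    (extVanish_pi M A 1 (hext 1 le_rfl (by omega)) (n 0)) C0
end
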